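/- Fix N, M, G ≥ 1, P > 0, μ > 0, a nonempty finite user set K, a fixed vector e ∈ ℂ^{M+1}, and for each k ∈ K: a matrix H_k ∈ ℂ^{(M+1)×N}, a group index g(k) ∈ {1,…,G}, a_k ∈ ℂ, b_k ≥ 0, c_k ∈ ℝ. Define B_k = b_k·H_kᴴ e eᴴ H_k ∈ ℂ^{N×N} and C_k ∈ ℂ^{N×G} as the matrix whose g(k)-th column is conj(a_k)·H_kᴴ e and whose other columns are zero, so that the surrogate rate is R̃_k(F) = c_k + 2·Re(Tr[C_kᴴ F]) − Tr[Fᴴ B_k F], and set f(F) = −(1/μ)·ln( Σ_{k∈K} exp(−μ·R̃_k(F)) ). Given Fⁿ ∈ ℂ^{N×G} with ‖Fⁿ‖_F² ≤ P, define the softmax weights g_k(Fⁿ) = exp(−μ·R̃_k(Fⁿ))/Σ_{j∈K} exp(−μ·R̃_j(Fⁿ)), the constants tp_k = P·b_k²·|eᴴ H_k H_kᴴ e|² + ‖C_k‖_F² + 2·√P·‖B_k C_k‖_F, α = −max_{k∈K}{ b_k·eᴴ H_k H_kᴴ e } − 2μ·max_{k∈K}{ tp_k } (here eᴴ H_k H_kᴴ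 e is a nonnegative real), D = Σ_{k∈K} g_k(Fⁿ)·(C_k − B_k Fⁿ), U = D − α·Fⁿ, and consF = f(Fⁿ) + α·‖Fⁿ‖_F² − 2·Re(Tr[Dᴴ Fⁿ]). Then for every F ∈ ℂ^{N×G} with ‖F‖_F² ≤ P: f(F) ≥ 2·Re(Tr[Uᴴ F]) + α·‖F‖_F² + consF, and equality holds at F = Fⁿ. -/

import Mathlib

open Matrix Finset

/-- Squared Frobenius norm of a complex matrix. -/
noncomputable def frobSq {m n : Type*} [Fintype m] [Fintype n] (X : Matrix m n ℂ) : ℝ :=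
  ∑ i, ∑ j, ‖X i j‖ ^ 2

/-- Frobenius norm of a complex matrix. -/
noncomputable def frob {m n : Type*} [Fintype m] [Fintype n] (X : Matrix m n ℂ) : ℝ :=
  Real.sqrt (frobSq X)

lemma csabs {ι : Type*} [Fintype ι] (x y : ι → ℂ) :
    ‖∑ i, x i * y i‖ ≤
      Real.sqrt (∑ i, ‖x i‖ ^ 2) * Real.sqrt (∑ i, ‖y i‖ ^ 2) := by
  calc ‖∑ i, x i * y i‖ ≤ ∑ i, ‖x i * y i‖ :=
        norm_sum_le _ _
    _ = ∑ i, ‖x i‖ * ‖y i‖ := by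
        refine Finset.sum_congr rfl fun i _ => ?_; exact norm_mul _ _
    _ ≤ _ := Real.sum_mul_le_sqrt_mul_sqrt _ _ _

lemma trace_conjT_mul {m n : Type*} [Fintype m] [Fintype n] (X Y : Matrix m n ℂ) :
    Matrix.trace (X.conjTranspose * Y) = ∑ j, ∑ i, (starRingEnd ℂ) (X i j) * Y i j := by
  simp [Matrix.trace, Matrix.mul_apply, Matrix.conjTranspose_apply, Matrix.diag]

lemma conj_mul_self_re (z : ℂ) : ((starRingEnd ℂ) z * z).re = ‖z‖ ^ 2 := by
  rw [Complex.sq_norm, Complex.normSq_apply, Complex.mul_re]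
  simp [Complex.conj_re, Complex.conj_im]

lemma re_conj_mul (z w : ℂ) : ((starRingEnd ℂ) z * w).re = (z * (starRingEnd ℂ) w).re := by
  simp [Complex.mul_re, Complex.conj_re, Complex.conj_im]

lemma frobSq_eq_re_trace {m n : Type*} [Fintype m] [Fintype n] (X : Matrix m n ℂ) :
    frobSq X = (Matrix.trace (X.conjTranspose * X)).re := by
  rw [trace_conjT_mul, frobSq, Complex.re_sum, Finset.sum_comm]
  exact Finset.sum_congr rfl fun i _ => by
    rw [Complex.re_sum]
    exact Finset.sum_congr rfl fun j _ => (conj_mul_self_re _).symm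

lemma frobSq_nonneg {m n : Type*} [Fintype m] [Fintype n] (X : Matrix m n ℂ) :
    0 ≤ frobSq X :=
  Finset.sum_nonneg fun _ _ => Finset.sum_nonneg fun _ _ => sq_nonneg _

lemma frobSq_sub {m n : Type*} [Fintype m] [Fintype n] (X Y : Matrix m n ℂ) :
    frobSq (X - Y) = frobSq X + frobSq Y - 2 * (Matrix.trace (Y.conjTranspose * X)).re := by
  have key : ∀ z w : ℂ, ‖z - w‖ ^ 2
      = ‖z‖ ^ 2 + ‖w‖ ^ 2 - 2 * ((starRingEnd ℂ) w * z).re := by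
    intro z w
    rw [Complex.sq_norm, Complex.sq_norm, Complex.sq_norm, Complex.normSq_sub,
      mul_comm (starRingEnd ℂ w) z]
  simp only [frobSq, Matrix.sub_apply, key, Finset.sum_sub_distrib, Finset.sum_add_distrib,
    trace_conjT_mul, Complex.re_sum, Finset.mul_sum]
  congr 1
  rw [Finset.sum_comm]

lemma lse_core {K : Type*} [Fintype K] [Nonempty K] (w t : K → ℝ)
    (hw0 : ∀ k, 0 < w k) (hw1 : ∑ k, w k = 1) (c : ℝ) (hc : ∀ k, t k ^ 2 ≤ c) :
    Real.log (∑ k, w k * Real.exp (t k)) ≤ (∑ k, w k * t k) + c / 2 := by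
  set S : ℝ → ℝ := fun s => ∑ k, w k * Real.exp (s * t k) with hS
  set S1 : ℝ → ℝ := fun s => ∑ k, w k * t k * Real.exp (s * t k) with hS1
  set S2 : ℝ → ℝ := fun s => ∑ k, w k * t k ^ 2 * Real.exp (s * t k) with hS2
  have hSpos : ∀ s, 0 < S s := fun s =>
    Finset.sum_pos (fun k _ => mul_pos (hw0 k) (Real.exp_pos _)) univ_nonempty
  have hdS : ∀ s, HasDerivAt S (S1 s) s := by
    intro s
    have h := HasDerivAt.fun_sum (u := univ)
      (fun (k : K) _ => (((hasDerivAt_id s).mul_const (t k)).exp.const_mul (w k)))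
    simp only [id_eq, one_mul] at h
    refine h.congr_deriv ?_
    show _ = ∑ k, w k * t k * Real.exp (s * t k)
    exact Finset.sum_congr rfl fun k _ => by ring
  have hdS1 : ∀ s, HasDerivAt S1 (S2 s) s := by
    intro s
    have h := HasDerivAt.fun_sum (u := univ)
      (fun (k : K) _ => (((hasDerivAt_id s).mul_const (t k)).exp.const_mul (w k * t k)))
    simp only [id_eq, one_mul] at h
    refine h.congr_deriv ?_
    show _ = ∑ k, w k * t k ^ 2 * Real.exp (s * t k)
    exact Finset.sum_congr rfl fun k _ => by ring
  set φ : ℝ → ℝ := fun s => Real.log (S s) with hφ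
  set G1 : ℝ → ℝ := fun s => S1 s / S s with hG1
  have hdφ : ∀ s, HasDerivAt φ (G1 s) s := fun s => (hdS s).log (hSpos s).ne'
  have hdG1 : ∀ s, HasDerivAt G1 ((S2 s * S s - S1 s * S1 s) / S s ^ 2) s := fun s =>
    (hdS1 s).div (hdS s) (hSpos s).ne'
  set m : ℝ := ∑ k, w k * t k with hm
  have hS0 : S 0 = 1 := by simp [hS, hw1]
  have hS10 : S1 0 = m := by simp [hS1, hm]
  have hG1le : ∀ s, (S2 s * S s - S1 s * S1 s) / S s ^ 2 ≤ c := by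
    intro s
    rw [div_le_iff₀ (pow_pos (hSpos s) 2)]
    have h2 : S2 s ≤ c * S s := by
      rw [hS2, hS, Finset.mul_sum]
      refine Finset.sum_le_sum fun k _ => ?_
      have e1 : t k ^ 2 * Real.exp (s * t k) ≤ c * Real.exp (s * t k) :=
        mul_le_mul_of_nonneg_right (hc k) (Real.exp_pos _).le
      calc w k * t k ^ 2 * Real.exp (s * t k) = w k * (t k ^ 2 * Real.exp (s * t k)) := by ring
        _ ≤ w k * (c * Real.exp (s * t k)) := mul_le_mul_of_nonneg_left e1 (hw0 k).le
        _ = c * (w k * Real.exp (s * t k)) := by ring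
    nlinarith [sq_nonneg (S1 s), hSpos s]
  set u : ℝ → ℝ := fun s => m + c * s - G1 s with hu
  have hdu : ∀ s, HasDerivAt u (c - (S2 s * S s - S1 s * S1 s) / S s ^ 2) s := by
    intro s
    have h1 : HasDerivAt (fun s : ℝ => m + c * s) (c * 1) s :=
      ((hasDerivAt_id s).const_mul c).const_add m
    exact (h1.sub (hdG1 s)).congr_deriv (by ring)
  have hufin : ∀ s ∈ Set.Icc (0:ℝ) 1, 0 ≤ u s := by
    have hmono : MonotoneOn u (Set.Icc (0:ℝ) 1) := by
      apply monotoneOn_of_deriv_nonneg (convex_Icc 0 1)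
      · have : Differentiable ℝ u := fun s => (hdu s).differentiableAt
        exact this.continuous.continuousOn
      · exact fun s _ => ((hdu s).differentiableAt).differentiableWithinAt
      · intro s _
        rw [(hdu s).deriv]
        linarith [hG1le s]
    intro s hs
    have h0 : u 0 = 0 := by simp [hu, hG1, hS0, hS10]
    have := hmono (Set.left_mem_Icc.2 zero_le_one) hs hs.1
    linarith [this, h0.symm.le]
  set v : ℝ → ℝ := fun s => m * s + c * s ^ 2 / 2 - φ s with hv
  have hdv : ∀ s, HasDerivAt v (m + c * s - G1 s) s := by
    intro s
    have h1 : HasDerivAt (fun s : ℝ => m * s) m s := by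
      simpa using (hasDerivAt_id s).const_mul m
    have h2 : HasDerivAt (fun s : ℝ => c * s ^ 2 / 2) (c * s) s := by
      have h := ((hasDerivAt_pow 2 s).const_mul c).div_const 2
      exact h.congr_deriv (by norm_num [mul_div_assoc])
    exact (h1.add h2).sub (hdφ s)
  have hvmono : MonotoneOn v (Set.Icc (0:ℝ) 1) := by
    apply monotoneOn_of_deriv_nonneg (convex_Icc 0 1)
    · have : Differentiable ℝ v := fun s => (hdv s).differentiableAt
      exact this.continuous.continuousOn
    · exact fun s _ => ((hdv s).differentiableAt).differentiableWithinAt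
    · intro s hs
      rw [(hdv s).deriv]
      have := hufin s (interior_subset hs)
      simp only [hu] at this
      linarith
  have hv0 : v 0 = 0 := by simp [hv, hφ, hS0]
  have hv1 : 0 ≤ v 1 := by
    have := hvmono (Set.left_mem_Icc.2 zero_le_one) (Set.right_mem_Icc.2 zero_le_one) zero_le_one
    linarith [hv0.symm.le]
  have hφ1 : φ 1 = Real.log (∑ k, w k * Real.exp (t k)) := by simp [hφ, hS]
  rw [← hφ1]
  simp only [hv] at hv1
  linarith

lemma lse_bound {K : Type*} [Fintype K] [Nonempty K] {μ : ℝ} (hμ : 0 < μ)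
    (x y : K → ℝ) (c : ℝ) (hc : ∀ k, (x k - y k) ^ 2 ≤ c) :
    -(1 / μ) * Real.log (∑ k, Real.exp (-μ * y k))
      + (∑ k, (Real.exp (-μ * y k) / ∑ j, Real.exp (-μ * y j)) * (x k - y k)) - μ / 2 * c
    ≤ -(1 / μ) * Real.log (∑ k, Real.exp (-μ * x k)) := by
  set Sy := ∑ j, Real.exp (-μ * y j) with hSy
  have hSyp : 0 < Sy := Finset.sum_pos (fun j _ => Real.exp_pos _) univ_nonempty
  set w : K → ℝ := fun k => Real.exp (-μ * y k) / Sy with hw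
  set t : K → ℝ := fun k => -μ * (x k - y k) with ht
  have hw0 : ∀ k, 0 < w k := fun k => div_pos (Real.exp_pos _) hSyp
  have hw1 : ∑ k, w k = 1 := by
    rw [hw, ← Finset.sum_div, div_self hSyp.ne']
  have hct : ∀ k, t k ^ 2 ≤ μ ^ 2 * c := by
    intro k
    have h1 : t k ^ 2 = μ ^ 2 * (x k - y k) ^ 2 := by rw [ht]; ring
    rw [h1]
    exact mul_le_mul_of_nonneg_left (hc k) (sq_nonneg μ)
  have key := lse_core w t hw0 hw1 (μ ^ 2 * c) hct
  have hswap : ∑ k, w k * Real.exp (t k) = (∑ k, Real.exp (-μ * x k)) / Sy := by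
    rw [eq_div_iff hSyp.ne', Finset.sum_mul]
    refine Finset.sum_congr rfl fun k _ => ?_
    rw [hw, ht]
    field_simp
    rw [← Real.exp_add]
    ring_nf
  have hxp : (0:ℝ) < ∑ k, Real.exp (-μ * x k) :=
    Finset.sum_pos (fun j _ => Real.exp_pos _) univ_nonempty
  rw [hswap, Real.log_div hxp.ne' hSyp.ne'] at key
  have hswt : ∑ k, w k * t k = -μ * ∑ k, w k * (x k - y k) := by
    rw [ht, Finset.mul_sum]
    exact Finset.sum_congr rfl fun k _ => by ring
  rw [hswt] at key
  have hμ' : (0:ℝ) < 1 / μ := by positivity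
  have k2 := mul_le_mul_of_nonneg_left key hμ'.le
  have e1 : 1 / μ * (-μ * (∑ k, w k * (x k - y k)) + μ ^ 2 * c / 2)
      = -(∑ k, w k * (x k - y k)) + μ * c / 2 := by
    field_simp
  rw [e1, mul_sub] at k2
  linarith

lemma qnorm_le {ι κ : Type*} [Fintype ι] [Fintype κ] (h : ι → ℂ) (X : Matrix ι κ ℂ) :
    ∑ j, ‖∑ i, (starRingEnd ℂ) (h i) * X i j‖ ^ 2
      ≤ (∑ i, ‖h i‖ ^ 2) * ∑ i, ∑ j, ‖X i j‖ ^ 2 := by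
  have hper : ∀ j, ‖∑ i, (starRingEnd ℂ) (h i) * X i j‖ ^ 2
      ≤ (∑ i, ‖h i‖ ^ 2) * ∑ i, ‖X i j‖ ^ 2 := by
    intro j
    have h1 := csabs (fun i => (starRingEnd ℂ) (h i)) (fun i => X i j)
    simp only [Complex.norm_conj] at h1
    have h2 : ‖∑ i, (starRingEnd ℂ) (h i) * X i j‖ ^ 2
        ≤ (Real.sqrt (∑ i, ‖h i‖ ^ 2)
            * Real.sqrt (∑ i, ‖X i j‖ ^ 2)) ^ 2 :=
      pow_le_pow_left₀ (norm_nonneg _) h1 2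
    rw [mul_pow, Real.sq_sqrt (by positivity), Real.sq_sqrt (by positivity)] at h2
    exact h2
  calc ∑ j, ‖∑ i, (starRingEnd ℂ) (h i) * X i j‖ ^ 2
      ≤ ∑ j, (∑ i, ‖h i‖ ^ 2) * ∑ i, ‖X i j‖ ^ 2 :=
        Finset.sum_le_sum fun j _ => hper j
    _ = (∑ i, ‖h i‖ ^ 2) * ∑ i, ∑ j, ‖X i j‖ ^ 2 := by
        rw [← Finset.mul_sum, Finset.sum_comm]
/-- Theorem 3 of the paper: explicit quadratic minorizer, with closed-form
curvature `α` and linear coefficient `U`, of the log-sum-exp smoothed group objective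
`f(F) = −(1/μ)ln(Σ_k exp(−μ·R̃_k(F)))` with respect to the precoding matrix `F` over the
transmit-power ball `‖F‖_F² ≤ P`; the minorizer is tight at `F = Fⁿ`. -/
theorem stmt15 (N M G : ℕ) (hN : 1 ≤ N) (hM : 1 ≤ M) (hG : 1 ≤ G)
    (P μ : ℝ) (hP : 0 < P) (hμ : 0 < μ)
    {K : Type*} [Fintype K] [Nonempty K]
    (H : K → Matrix (Fin (M + 1)) (Fin N) ℂ) (g : K → Fin G)
    (a : K → ℂ) (b : K → ℝ) (hb : ∀ k, 0 ≤ b k) (c : K → ℝ)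
    (e : Fin (M + 1) → ℂ)
    (B : K → Matrix (Fin N) (Fin N) ℂ)
    (hB : ∀ k, B k = b k • vecMulVec ((H k).conjTranspose.mulVec e)
        (star ((H k).conjTranspose.mulVec e)))
    (C : K → Matrix (Fin N) (Fin G) ℂ)
    (hC : ∀ k, C k = Matrix.of fun i j =>
        if j = g k then starRingEnd ℂ (a k) * (H k).conjTranspose.mulVec e i else 0)
    (Rt : K → Matrix (Fin N) (Fin G) ℂ → ℝ)
    (hRt : ∀ k F, Rt k F = c k + 2 * (Matrix.trace ((C k).conjTranspose * F)).re
        - (Matrix.trace (F.conjTranspose * B k * F)).re)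
    (f : Matrix (Fin N) (Fin G) ℂ → ℝ)
    (hf : ∀ F, f F = -(1 / μ) * Real.log (∑ k, Real.exp (-μ * Rt k F)))
    (Fn : Matrix (Fin N) (Fin G) ℂ) (hFn : frobSq Fn ≤ P)
    (w : K → ℝ)
    (hw : ∀ k, w k = Real.exp (-μ * Rt k Fn) / ∑ j, Real.exp (-μ * Rt j Fn))
    (tp : K → ℝ)
    (htp : ∀ k, tp k = P * b k ^ 2 *
          ‖star e ⬝ᵥ (H k * (H k).conjTranspose).mulVec e‖ ^ 2
        + frobSq (C k) + 2 * Real.sqrt P * frob (B k * C k))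
    (α : ℝ)
    (hα : α = -(Finset.univ.sup' Finset.univ_nonempty fun k =>
          b k * (star e ⬝ᵥ (H k * (H k).conjTranspose).mulVec e).re)
        - 2 * μ * Finset.univ.sup' Finset.univ_nonempty tp)
    (D U : Matrix (Fin N) (Fin G) ℂ)
    (hD : D = ∑ k, w k • (C k - B k * Fn))
    (hU : U = D - α • Fn)
    (consF : ℝ)
    (hconsF : consF = f Fn + α * frobSq Fn
        - 2 * (Matrix.trace (D.conjTranspose * Fn)).re) :
    (∀ F : Matrix (Fin N) (Fin G) ℂ, frobSq F ≤ P →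
      f F ≥ 2 * (Matrix.trace (U.conjTranspose * F)).re + α * frobSq F + consF) ∧
    f Fn = 2 * (Matrix.trace (U.conjTranspose * Fn)).re + α * frobSq Fn + consF := by
  classical
  -- basic notation
  set h : K → Fin N → ℂ := fun k => (H k).conjTranspose.mulVec e with hh
  set q : K → Matrix (Fin N) (Fin G) ℂ → Fin G → ℂ :=
    fun k X j => ∑ i, (starRingEnd ℂ) (h k i) * X i j with hq
  set A : K → ℝ := fun k => ∑ i, ‖h k i‖ ^ 2 with hA
  have hA0 : ∀ k, 0 ≤ A k := fun k => Finset.sum_nonneg fun _ _ => sq_nonneg _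
  set hn : K → ℝ := fun k => Real.sqrt (A k) with hhn
  have hn0 : ∀ k, 0 ≤ hn k := fun k => Real.sqrt_nonneg _
  have hn_sq : ∀ k, hn k ^ 2 = A k := fun k => Real.sq_sqrt (hA0 k)
  -- the quadratic-form scalar identities
  have hdot : ∀ k, star e ⬝ᵥ (H k * (H k).conjTranspose).mulVec e = ((A k : ℝ) : ℂ) := by
    intro k
    have h1 : (H k * (H k).conjTranspose).mulVec e = (H k).mulVec (h k) := by
      rw [hh, ← Matrix.mulVec_mulVec]
    rw [h1, dotProduct_mulVec]
    have h2 : Matrix.vecMul (star e) (H k) = star (h k) := by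
      funext n
      rw [hh]
      simp only [Matrix.vecMul, Matrix.mulVec, dotProduct, Pi.star_apply,
        Matrix.conjTranspose_apply, map_sum, Complex.star_def]
      refine Finset.sum_congr rfl fun m _ => ?_
      rw [_root_.map_mul, Complex.conj_conj]
      ring
    rw [h2, hA]
    simp only [dotProduct, Pi.star_apply, Complex.ofReal_sum, Complex.star_def,
      Complex.sq_norm]
    exact Finset.sum_congr rfl fun n _ => Complex.normSq_eq_conj_mul_self.symm
  have hTC : ∀ k (X : Matrix (Fin N) (Fin G) ℂ),
      Matrix.trace ((C k).conjTranspose * X) = a k * q k X (g k) := by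
    intro k X
    rw [trace_conjT_mul, hC]
    simp only [Matrix.of_apply]
    have hj : ∀ j, (∑ i, (starRingEnd ℂ)
          (if j = g k then (starRingEnd ℂ) (a k) * ((H k).conjTranspose.mulVec e) i else 0) * X i j)
        = if j = g k then a k * q k X j else 0 := by
      intro j
      split
      · simp only [hq, Finset.mul_sum]
        refine Finset.sum_congr rfl fun i _ => ?_
        rw [_root_.map_mul, Complex.conj_conj]
        simp only [hh]
        ring
      · simp
    rw [Finset.sum_congr rfl fun j _ => hj j, Finset.sum_ite_eq' Finset.univ (g k)]
    simp
  have hTB : ∀ k (X Y : Matrix (Fin N) (Fin G) ℂ),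
      Matrix.trace (X.conjTranspose * B k * Y)
        = (b k : ℂ) * ∑ j, (starRingEnd ℂ) (q k X j) * q k Y j := by
    intro k X Y
    rw [Matrix.mul_assoc, trace_conjT_mul, Finset.mul_sum]
    refine Finset.sum_congr rfl fun j _ => ?_
    have hBY : ∀ i, (B k * Y) i j = (b k : ℂ) * (h k i * q k Y j) := by
      intro i
      rw [hB k, Matrix.mul_apply]
      simp only [Matrix.smul_apply, Matrix.vecMulVec_apply, Pi.star_apply, Complex.star_def,
        Complex.real_smul, hq, hh]
      rw [Finset.mul_sum, Finset.mul_sum]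
      refine Finset.sum_congr rfl fun l _ => ?_
      ring
    have hconj : (starRingEnd ℂ) (q k X j) = ∑ i, h k i * (starRingEnd ℂ) (X i j) := by
      simp only [hq, map_sum]
      refine Finset.sum_congr rfl fun i _ => ?_
      rw [_root_.map_mul, Complex.conj_conj]
    rw [hconj, Finset.sum_mul, Finset.mul_sum]
    refine Finset.sum_congr rfl fun i _ => ?_
    rw [hBY i]
    ring
  have hRq : ∀ k (X : Matrix (Fin N) (Fin G) ℂ),
      Rt k X = c k + 2 * (a k * q k X (g k)).re - b k * ∑ j, ‖q k X j‖ ^ 2 := by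
    intro k X
    rw [hRt, hTC, hTB]
    have : ((b k : ℂ) * ∑ j, (starRingEnd ℂ) (q k X j) * q k X j).re
        = b k * ∑ j, ‖q k X j‖ ^ 2 := by
      rw [← Complex.ofReal_re (b k)]
      rw [Complex.re_ofReal_mul, Complex.re_sum]
      congr 1
      exact Finset.sum_congr rfl fun j _ => conj_mul_self_re _
    rw [this]
  -- weights
  have hw0 : ∀ k, 0 < w k := by
    intro k
    rw [hw k]
    exact div_pos (Real.exp_pos _) (Finset.sum_pos (fun j _ => Real.exp_pos _) univ_nonempty)
  have hw1 : ∑ k, w k = 1 := by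
    calc ∑ k, w k = (∑ k, Real.exp (-μ * Rt k Fn)) / ∑ j, Real.exp (-μ * Rt j Fn) := by
          rw [Finset.sum_div]; exact Finset.sum_congr rfl fun k _ => hw k
      _ = 1 := div_self (Finset.sum_pos (fun j _ => Real.exp_pos _) univ_nonempty).ne'
  -- trace with D
  have hTD : ∀ X : Matrix (Fin N) (Fin G) ℂ,
      (Matrix.trace (D.conjTranspose * X)).re
        = ∑ k, w k * ((a k * q k X (g k)).re
            - b k * (∑ j, (starRingEnd ℂ) (q k X j) * q k Fn j).re) := by
    intro X
    have hBFn : ∀ (X : Matrix (Fin N) (Fin G) ℂ) k,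
        (Matrix.trace ((B k * Fn).conjTranspose * X)).re
          = b k * (∑ j, (starRingEnd ℂ) (q k X j) * q k Fn j).re := by
      intro X k
      have h1 : (X.conjTranspose * (B k * Fn)).conjTranspose
          = (B k * Fn).conjTranspose * X := by
        rw [Matrix.conjTranspose_mul, Matrix.conjTranspose_conjTranspose]
      rw [← h1, Matrix.trace_conjTranspose, ← Matrix.mul_assoc, hTB]
      rw [Complex.star_def, Complex.conj_re, Complex.re_ofReal_mul]
    rw [hD, Matrix.conjTranspose_sum, Matrix.sum_mul, Matrix.trace_sum, Complex.re_sum]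
    refine Finset.sum_congr rfl fun k _ => ?_
    rw [Matrix.conjTranspose_smul, Matrix.smul_mul, Matrix.trace_smul, star_trivial,
      Complex.real_smul, Complex.re_ofReal_mul]
    congr 1
    rw [Matrix.conjTranspose_sub, Matrix.sub_mul, Matrix.trace_sub, Complex.sub_re, hTC]
    congr 1
    exact hBFn X k
  -- tp in closed form
  have hqC : ∀ k j, q k (C k) j
      = if j = g k then (starRingEnd ℂ) (a k) * ((A k : ℝ) : ℂ) else 0 := by
    intro k j
    simp only [hq, hC, Matrix.of_apply]
    split
    · rw [hA, Complex.ofReal_sum, Finset.mul_sum]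
      refine Finset.sum_congr rfl fun i _ => ?_
      rw [show ((‖h k i‖ ^ 2 : ℝ) : ℂ) = (starRingEnd ℂ) (h k i) * h k i from by
        rw [Complex.sq_norm]; exact Complex.normSq_eq_conj_mul_self]
      have he : ((H k).conjTranspose.mulVec e) i = h k i := rfl
      rw [he]
      ring
    · simp
  have hBapp : ∀ k (Y : Matrix (Fin N) (Fin G) ℂ) i j,
      (B k * Y) i j = (b k : ℂ) * (h k i * q k Y j) := by
    intro k Y i j
    rw [hB k, Matrix.mul_apply]
    simp only [Matrix.smul_apply, Matrix.vecMulVec_apply, Pi.star_apply, Complex.star_def,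
      Complex.real_smul, hq, hh]
    rw [Finset.mul_sum, Finset.mul_sum]
    refine Finset.sum_congr rfl fun l _ => ?_
    ring
  have htp2 : ∀ k, tp k = (‖a k‖ * hn k + b k * hn k ^ 2 * Real.sqrt P) ^ 2 := by
    intro k
    have hia : ‖star e ⬝ᵥ (H k * (H k).conjTranspose).mulVec e‖ = A k := by
      rw [hdot k, Complex.norm_real, Real.norm_eq_abs, abs_of_nonneg (hA0 k)]
    have hCfs : frobSq (C k) = ‖a k‖ ^ 2 * A k := by
      simp only [frobSq, hC, Matrix.of_apply, hA]
      rw [Finset.mul_sum]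
      refine Finset.sum_congr rfl fun i _ => ?_
      have hj : ∀ j : Fin G, ‖
            (if j = g k then (starRingEnd ℂ) (a k) * ((H k).conjTranspose.mulVec e) i else 0)‖ ^ 2
          = if j = g k then ‖a k‖ ^ 2 * ‖h k i‖ ^ 2 else 0 := by
        intro j
        split
        · rw [norm_mul, Complex.norm_conj, mul_pow]
        · simp
      rw [Finset.sum_congr rfl fun j _ => hj j, Finset.sum_ite_eq' Finset.univ (g k)]
      simp
    have hBCfs : frobSq (B k * C k) = b k ^ 2 * ‖a k‖ ^ 2 * A k ^ 3 := by
      simp only [frobSq]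
      have hij : ∀ (i : Fin N) (j : Fin G), ‖(B k * C k) i j‖ ^ 2
          = if j = g k then
              b k ^ 2 * ‖a k‖ ^ 2 * A k ^ 2 * ‖h k i‖ ^ 2 else 0 := by
        intro i j
        rw [hBapp k (C k) i j, hqC k j]
        split
        · simp only [norm_mul, Complex.norm_conj, Complex.norm_real, Real.norm_eq_abs]
          rw [abs_of_nonneg (hA0 k), abs_of_nonneg (hb k)]
          ring
        · simp
      rw [Finset.sum_congr rfl fun i _ => Finset.sum_congr rfl fun j _ => hij i j]
      have : ∀ i : Fin N, (∑ j, if j = g k then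
          b k ^ 2 * ‖a k‖ ^ 2 * A k ^ 2 * ‖h k i‖ ^ 2 else 0)
          = b k ^ 2 * ‖a k‖ ^ 2 * A k ^ 2 * ‖h k i‖ ^ 2 := by
        intro i
        rw [Finset.sum_ite_eq' Finset.univ (g k)]
        simp
      rw [Finset.sum_congr rfl fun i _ => this i, ← Finset.mul_sum]
      rw [show (∑ i, ‖h k i‖ ^ 2) = A k from (by rw [hA])]
      ring
    have hBCf : frob (B k * C k) = b k * ‖a k‖ * A k * hn k := by
      rw [frob, hBCfs]
      rw [show b k ^ 2 * ‖a k‖ ^ 2 * A k ^ 3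
          = (b k * ‖a k‖ * A k * hn k) ^ 2 from by rw [← hn_sq k]; ring]
      exact Real.sqrt_sq (mul_nonneg (mul_nonneg (mul_nonneg (hb k)
        (norm_nonneg _)) (hA0 k)) (hn0 k))
    rw [htp k, hia, hCfs, hBCf, ← hn_sq k]
    set sp := Real.sqrt P with hsp
    rw [show P = sp ^ 2 from (Real.sq_sqrt hP.le).symm]
    ring
  -- sup bounds
  set L : ℝ := Finset.univ.sup' Finset.univ_nonempty fun k =>
    b k * (star e ⬝ᵥ (H k * (H k).conjTranspose).mulVec e).re with hL
  set τ : ℝ := Finset.univ.sup' Finset.univ_nonempty tp with hτ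
  have hLk : ∀ k, b k * A k ≤ L := by
    intro k
    have := Finset.le_sup' (f := fun k =>
      b k * (star e ⬝ᵥ (H k * (H k).conjTranspose).mulVec e).re) (Finset.mem_univ k)
    rwa [hdot k, Complex.ofReal_re] at this
  have hτk : ∀ k, tp k ≤ τ := fun k => Finset.le_sup' tp (Finset.mem_univ k)
  have hτ0 : 0 ≤ τ := le_trans (by rw [htp2]; positivity) (hτk (Classical.arbitrary K))
  -- the master identity for the right-hand side
  have hID : ∀ F : Matrix (Fin N) (Fin G) ℂ,
      2 * (Matrix.trace (U.conjTranspose * F)).re + α * frobSq F + consF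
        = f Fn + 2 * (Matrix.trace (D.conjTranspose * (F - Fn))).re + α * frobSq (F - Fn) := by
    intro F
    have h1 : Matrix.trace (U.conjTranspose * F)
        = Matrix.trace (D.conjTranspose * F) - (α : ℂ) * Matrix.trace (Fn.conjTranspose * F) := by
      rw [hU, Matrix.conjTranspose_sub, Matrix.sub_mul, Matrix.trace_sub,
        Matrix.conjTranspose_smul, star_trivial, Matrix.smul_mul, Matrix.trace_smul,
        Complex.real_smul]
    have h2 : Matrix.trace (D.conjTranspose * (F - Fn))
        = Matrix.trace (D.conjTranspose * F) - Matrix.trace (D.conjTranspose * Fn) := by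
      rw [Matrix.mul_sub, Matrix.trace_sub]
    rw [h1, h2, hconsF, frobSq_sub]
    simp only [Complex.sub_re, Complex.re_ofReal_mul]
    ring
  constructor
  · -- main inequality
    intro F hFP
    set Δ : Matrix (Fin N) (Fin G) ℂ := F - Fn with hΔ
    have hqlin : ∀ k j, q k Δ j = q k F j - q k Fn j := by
      intro k j
      simp only [hq, hΔ, Matrix.sub_apply, mul_sub, Finset.sum_sub_distrib]
    set d2 : ℝ := frobSq Δ with hd2
    have hd20 : 0 ≤ d2 := frobSq_nonneg Δ
    have hnq : ∀ k (X : Matrix (Fin N) (Fin G) ℂ),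
        (∑ j, ‖q k X j‖ ^ 2) ≤ A k * frobSq X := by
      intro k X
      simpa only [hq, hA, frobSq] using qnorm_le (h k) X
    -- the c1 identity
    have hc1 : ∀ k, Rt k F - Rt k Fn
        = 2 * (a k * q k Δ (g k)).re
          - 2 * (b k * (∑ j, (starRingEnd ℂ) (q k Δ j) * q k Fn j).re)
          - b k * ∑ j, ‖q k Δ j‖ ^ 2 := by
      intro k
      have hqFg : q k F (g k) = q k Δ (g k) + q k Fn (g k) := by rw [hqlin]; ring
      have hsplit : ∀ j, ‖q k F j‖ ^ 2
          = ‖q k Δ j‖ ^ 2 + ‖q k Fn j‖ ^ 2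
            + 2 * ((starRingEnd ℂ) (q k Δ j) * q k Fn j).re := by
        intro j
        have hqF : q k F j = q k Δ j + q k Fn j := by rw [hqlin]; ring
        rw [hqF, Complex.sq_norm, Complex.sq_norm, Complex.sq_norm, Complex.normSq_add,
          ← re_conj_mul]
      have hSF : (∑ j, ‖q k F j‖ ^ 2)
          = (∑ j, ‖q k Δ j‖ ^ 2) + (∑ j, ‖q k Fn j‖ ^ 2)
            + 2 * (∑ j, (starRingEnd ℂ) (q k Δ j) * q k Fn j).re := by
        rw [Finset.sum_congr rfl fun j _ => hsplit j, Finset.sum_add_distrib,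
          Finset.sum_add_distrib, Complex.re_sum, Finset.mul_sum]
      rw [hRq k F, hRq k Fn, hSF, hqFg, mul_add, Complex.add_re]
      ring
    -- the c2 identity
    have hc2 : ∀ k, Rt k F - Rt k Fn
        = 2 * (a k * q k Δ (g k)).re
          - b k * (∑ j, (starRingEnd ℂ) (q k Δ j) * q k F j).re
          - b k * (∑ j, (starRingEnd ℂ) (q k Δ j) * q k Fn j).re := by
      intro k
      have hx : (∑ j, (starRingEnd ℂ) (q k Δ j) * q k F j).re
          = (∑ j, ‖q k Δ j‖ ^ 2)
            + (∑ j, (starRingEnd ℂ) (q k Δ j) * q k Fn j).re := by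
        have hterm : ∀ j, (starRingEnd ℂ) (q k Δ j) * q k F j
            = (starRingEnd ℂ) (q k Δ j) * q k Δ j + (starRingEnd ℂ) (q k Δ j) * q k Fn j := by
          intro j
          rw [show q k F j = q k Δ j + q k Fn j from by rw [hqlin]; ring]
          ring
        rw [Finset.sum_congr rfl fun j _ => hterm j, Finset.sum_add_distrib, Complex.add_re]
        congr 1
        rw [Complex.re_sum]
        exact Finset.sum_congr rfl fun j _ => conj_mul_self_re _
      rw [hc1 k, hx]
      ring
    -- quantitative bounds
    set δ : ℝ := Real.sqrt d2 with hδ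
    have hδ0 : 0 ≤ δ := Real.sqrt_nonneg _
    have hδ2 : δ ^ 2 = d2 := Real.sq_sqrt hd20
    have hbound : ∀ k, (Rt k F - Rt k Fn) ^ 2 ≤ 4 * tp k * d2 := by
      intro k
      set nΔ : ℝ := Real.sqrt (∑ j, ‖q k Δ j‖ ^ 2) with hnΔ
      have hnΔ0 : 0 ≤ nΔ := Real.sqrt_nonneg _
      have hΔb : nΔ ≤ hn k * δ := by
        rw [hnΔ, hhn, hδ, ← Real.sqrt_mul (hA0 k)]
        exact Real.sqrt_le_sqrt (hnq k Δ)
      have hFb : Real.sqrt (∑ j, ‖q k F j‖ ^ 2) ≤ hn k * Real.sqrt P := by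
        rw [hhn, ← Real.sqrt_mul (hA0 k)]
        exact Real.sqrt_le_sqrt ((hnq k F).trans (mul_le_mul_of_nonneg_left hFP (hA0 k)))
      have hFnb : Real.sqrt (∑ j, ‖q k Fn j‖ ^ 2) ≤ hn k * Real.sqrt P := by
        rw [hhn, ← Real.sqrt_mul (hA0 k)]
        exact Real.sqrt_le_sqrt ((hnq k Fn).trans (mul_le_mul_of_nonneg_left hFn (hA0 k)))
      have hsingle : ‖q k Δ (g k)‖ ≤ nΔ := by
        rw [hnΔ, show ‖q k Δ (g k)‖ = Real.sqrt (‖q k Δ (g k)‖ ^ 2) from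
          (Real.sqrt_sq (norm_nonneg _)).symm]
        exact Real.sqrt_le_sqrt (Finset.single_le_sum
          (fun j _ => sq_nonneg (‖q k Δ j‖)) (Finset.mem_univ (g k)))
      have habs1 : |(a k * q k Δ (g k)).re| ≤ ‖a k‖ * nΔ := by
        refine (Complex.abs_re_le_norm _).trans ?_
        rw [norm_mul]
        exact mul_le_mul_of_nonneg_left hsingle (norm_nonneg _)
      have habs2 : |(∑ j, (starRingEnd ℂ) (q k Δ j) * q k F j).re|
          ≤ nΔ * (hn k * Real.sqrt P) := by
        refine (Complex.abs_re_le_norm _).trans ?_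
        have h2 := csabs (fun j => (starRingEnd ℂ) (q k Δ j)) (fun j => q k F j)
        simp only [Complex.norm_conj] at h2
        exact h2.trans (mul_le_mul (le_of_eq (by rw [hnΔ])) hFb (Real.sqrt_nonneg _) hnΔ0)
      have habs3 : |(∑ j, (starRingEnd ℂ) (q k Δ j) * q k Fn j).re|
          ≤ nΔ * (hn k * Real.sqrt P) := by
        refine (Complex.abs_re_le_norm _).trans ?_
        have h2 := csabs (fun j => (starRingEnd ℂ) (q k Δ j)) (fun j => q k Fn j)
        simp only [Complex.norm_conj] at h2
        exact h2.trans (mul_le_mul (le_of_eq (by rw [hnΔ])) hFnb (Real.sqrt_nonneg _) hnΔ0)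
      have hxy : |Rt k F - Rt k Fn|
          ≤ 2 * (‖a k‖ * hn k + b k * hn k ^ 2 * Real.sqrt P) * δ := by
        rw [hc2 k]
        have t1 : |2 * (a k * q k Δ (g k)).re
            - b k * (∑ j, (starRingEnd ℂ) (q k Δ j) * q k F j).re
            - b k * (∑ j, (starRingEnd ℂ) (q k Δ j) * q k Fn j).re|
            ≤ 2 * |(a k * q k Δ (g k)).re|
              + b k * |(∑ j, (starRingEnd ℂ) (q k Δ j) * q k F j).re|
              + b k * |(∑ j, (starRingEnd ℂ) (q k Δ j) * q k Fn j).re| := by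
          have u1 := abs_sub (2 * (a k * q k Δ (g k)).re
              - b k * (∑ j, (starRingEnd ℂ) (q k Δ j) * q k F j).re)
            (b k * (∑ j, (starRingEnd ℂ) (q k Δ j) * q k Fn j).re)
          have u2 := abs_sub (2 * (a k * q k Δ (g k)).re)
            (b k * (∑ j, (starRingEnd ℂ) (q k Δ j) * q k F j).re)
          have v1 : |b k * (∑ j, (starRingEnd ℂ) (q k Δ j) * q k Fn j).re|
              = b k * |(∑ j, (starRingEnd ℂ) (q k Δ j) * q k Fn j).re| := by
            rw [abs_mul, abs_of_nonneg (hb k)]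
          have v2 : |b k * (∑ j, (starRingEnd ℂ) (q k Δ j) * q k F j).re|
              = b k * |(∑ j, (starRingEnd ℂ) (q k Δ j) * q k F j).re| := by
            rw [abs_mul, abs_of_nonneg (hb k)]
          have v3 : |2 * (a k * q k Δ (g k)).re| = 2 * |(a k * q k Δ (g k)).re| := by
            rw [abs_mul, abs_of_nonneg (by norm_num : (0:ℝ) ≤ 2)]
          rw [v1] at u1
          rw [v2, v3] at u2
          linarith
        refine t1.trans ?_
        have w1 := mul_le_mul_of_nonneg_left habs2 (hb k)
        have w2 := mul_le_mul_of_nonneg_left habs3 (hb k)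
        have w3 := mul_le_mul_of_nonneg_left habs1 (by norm_num : (0:ℝ) ≤ 2)
        have hnd : ‖a k‖ * nΔ ≤ ‖a k‖ * (hn k * δ) :=
          mul_le_mul_of_nonneg_left hΔb (norm_nonneg _)
        have hbd : b k * (nΔ * (hn k * Real.sqrt P)) ≤ b k * hn k ^ 2 * Real.sqrt P * δ := by
          calc b k * (nΔ * (hn k * Real.sqrt P))
              ≤ b k * ((hn k * δ) * (hn k * Real.sqrt P)) :=
                mul_le_mul_of_nonneg_left (mul_le_mul_of_nonneg_right hΔb
                  (mul_nonneg (hn0 k) (Real.sqrt_nonneg P))) (hb k)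
            _ = b k * hn k ^ 2 * Real.sqrt P * δ := by ring
        have hrhs : 2 * (‖a k‖ * hn k + b k * hn k ^ 2 * Real.sqrt P) * δ
            = 2 * (‖a k‖ * (hn k * δ)) + (b k * hn k ^ 2 * Real.sqrt P * δ)
              + (b k * hn k ^ 2 * Real.sqrt P * δ) := by ring
        rw [hrhs]
        linarith [w1, w2, w3, hnd, hbd]
      have hsq : (Rt k F - Rt k Fn) ^ 2
          ≤ (2 * (‖a k‖ * hn k + b k * hn k ^ 2 * Real.sqrt P) * δ) ^ 2 := by
        rw [← sq_abs]
        exact pow_le_pow_left₀ (abs_nonneg _) hxy 2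
      refine hsq.trans (le_of_eq ?_)
      rw [htp2 k, ← hδ2]
      ring
    -- apply the smoothing bound
    have hτb : ∀ k, (Rt k F - Rt k Fn) ^ 2 ≤ 4 * τ * d2 := fun k =>
      (hbound k).trans (by nlinarith [hτk k, hd20])
    have key := lse_bound hμ (fun k => Rt k F) (fun k => Rt k Fn) (4 * τ * d2) hτb
    rw [← hf F, ← hf Fn] at key
    have hwsum : (∑ k, (Real.exp (-μ * Rt k Fn) / ∑ j, Real.exp (-μ * Rt j Fn))
        * (Rt k F - Rt k Fn)) = ∑ k, w k * (Rt k F - Rt k Fn) :=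
      Finset.sum_congr rfl fun k _ => by rw [← hw k]
    rw [hwsum] at key
    -- identify the weighted sum
    have hsum : ∑ k, w k * (Rt k F - Rt k Fn)
        = 2 * (Matrix.trace (D.conjTranspose * Δ)).re
          - ∑ k, w k * (b k * ∑ j, ‖q k Δ j‖ ^ 2) := by
      rw [hTD Δ, Finset.mul_sum, ← Finset.sum_sub_distrib]
      refine Finset.sum_congr rfl fun k _ => ?_
      rw [hc1 k]
      ring
    have hres : ∑ k, w k * (b k * ∑ j, ‖q k Δ j‖ ^ 2) ≤ L * d2 := by
      calc ∑ k, w k * (b k * ∑ j, ‖q k Δ j‖ ^ 2)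
          ≤ ∑ k, w k * (L * d2) := by
            refine Finset.sum_le_sum fun k _ => mul_le_mul_of_nonneg_left ?_ (hw0 k).le
            calc b k * ∑ j, ‖q k Δ j‖ ^ 2
                ≤ b k * (A k * d2) := mul_le_mul_of_nonneg_left (by
                  simpa only [← hd2] using hnq k Δ) (hb k)
              _ = (b k * A k) * d2 := by ring
              _ ≤ L * d2 := mul_le_mul_of_nonneg_right (hLk k) hd20
        _ = L * d2 := by rw [← Finset.sum_mul, hw1, one_mul]
    rw [ge_iff_le, hID F, ← hΔ, ← hd2]
    rw [hsum] at key
    have hαe : α = -L - 2 * μ * τ := hα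
    rw [hαe]
    linarith [key, hres]
  · -- equality at Fn
    rw [hID Fn]
    simp [frobSq, sub_self]
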